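/- Consider the linear system on ℝ^{3m} given by: (i) for each of the 3m/2 edges, the sum of the two opposite corner-variables equals π - α(e); (ii) for each of the m triangles, the sum of its three corner-variables equals π. Assuming α satisfies the vertex condition (the α-weights around each vertex sum to 2π) and the torus is connected, the space of linear relations between these 5m/2 equations is exactly one-dimensional: the sum of all equations (i) equals the sum of all equations (ii), both right-hand sides being mπ. -/

import Mathlib

open Finset Real

/-- A combinatorial triangulation `O = (V, E, F)` of the torus with `m`
triangles. `Cor` is the set of the `3m` corners of triangles; `tri j` is the
triangle containing the corner `j`, `vert j` its vertex, `opp j` the edge of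
its triangle opposite to it; `nxt` is the counterclockwise next corner inside
each triangle (a fixed-point free rotation of order 3 on each fiber of `tri`);
`sgm j` is the other corner opposite to the same edge `opp j`, in the triangle
adjacent across that edge.  The cardinality axioms encode `|F| = m`,
`2|E| = 3m`, `2|V| = m` (so `χ = V - E + F = 0`, as for the torus), and the
last axiom says that the two endpoints of an edge (namely the vertices of the
two other corners of an adjacent triangle) do not depend, as an unordered
pair, on the side from which they are computed. -/
structure TorusTriangulation (Cor F E V : Type*)
    [Fintype Cor] [DecidableEq Cor] [Fintype F] [DecidableEq F]
    [Fintype E] [DecidableEq E] [Fintype V] [DecidableEq V] where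
  m : ℕ
  hm : 0 < m
  tri : Cor → F
  vert : Cor → V
  opp : Cor → E
  nxt : Cor → Cor
  sgm : Cor → Cor
  card_cor : Fintype.card Cor = 3 * m
  card_faces : Fintype.card F = m
  card_edges : 2 * Fintype.card E = 3 * m
  card_verts : 2 * Fintype.card V = m
  tri_nxt : ∀ j, tri (nxt j) = tri j
  nxt_nxt_nxt : ∀ j, nxt (nxt (nxt j)) = j
  nxt_ne : ∀ j, nxt j ≠ j
  tri_fiber : ∀ j k, tri j = tri k → k = j ∨ k = nxt j ∨ k = nxt (nxt j)
  sgm_sgm : ∀ j, sgm (sgm j) = j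
  sgm_ne : ∀ j, sgm j ≠ j
  opp_sgm : ∀ j, opp (sgm j) = opp j
  opp_fiber : ∀ j k, opp j = opp k → k = j ∨ k = sgm j
  opp_surj : Function.Surjective opp
  endpoints_sgm : ∀ j, ({vert (nxt j), vert (nxt (nxt j))} : Multiset V) =
    {vert (nxt (sgm j)), vert (nxt (nxt (sgm j)))}

variable {Cor F E V : Type*}
    [Fintype Cor] [DecidableEq Cor] [Fintype F] [DecidableEq F]
    [Fintype E] [DecidableEq E] [Fintype V] [DecidableEq V]

/-- The space of linear relations between the edge equations
`θⱼ + θ_{σj} = π - α(e)` (one for each edge `e`, in which `θⱼ` has coefficient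
`1` exactly when `e = opp j`) and the triangle equations
`θⱼ + θ_{nxt j} + θ_{nxt² j} = π` (one for each triangle) is exactly
one-dimensional, provided the dual graph of the triangulation is connected: a
family of coefficients `(lam, mu)` is a relation iff `lam` is a constant `c`
on edges and `mu` is the constant `-c` on triangles, i.e. the only relation is
"sum of all edge equations = sum of all triangle equations".  Moreover, if
the `α`-weights around every vertex sum to `2π` (doubled count `4π` below),
the two right-hand sides agree: `Σ_e (π - α(e)) = mπ = Σ_f π`. -/
theorem relation_space_one_dimensional (T : TorusTriangulation Cor F E V)
    (α : E → ℝ)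
    (hconn : ∀ f f' : F, Relation.ReflTransGen
      (fun g g' => ∃ j, T.tri j = g ∧ T.tri (T.sgm j) = g') f f')
    (hvert : ∀ v : V,
      ∑ j ∈ Finset.univ.filter (fun j => T.vert j = v),
        (α (T.opp (T.nxt j)) + α (T.opp (T.nxt (T.nxt j)))) = 4 * π) :
    (∀ (lam : E → ℝ) (mu : F → ℝ),
      (∀ j : Cor, lam (T.opp j) + mu (T.tri j) = 0) →
      ∃ c : ℝ, (∀ e, lam e = c) ∧ (∀ f, mu f = -c)) ∧
    (∑ e : E, (π - α e)) = (T.m : ℝ) * π := by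

  constructor
  · intro lam mu hrel
    have hcorpos : 0 < Fintype.card Cor := by
      rw [T.card_cor]; have := T.hm; omega
    obtain ⟨j0⟩ : Nonempty Cor := Fintype.card_pos_iff.mp hcorpos
    refine ⟨lam (T.opp j0), ?_, ?_⟩
    · -- first: mu is constant
      have hmu : ∀ f, mu f = mu (T.tri j0) := by
        intro f
        induction hconn (T.tri j0) f with
        | refl => rfl
        | tail hab hbc ih =>
          obtain ⟨j, hj1, hj2⟩ := hbc
          have h1 := hrel j
          have h2 := hrel (T.sgm j)
          rw [T.opp_sgm] at h2
          rw [hj1] at h1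
          rw [hj2] at h2
          rw [← ih]
          linarith
      intro e
      obtain ⟨j, rfl⟩ := T.opp_surj e
      have h1 := hrel j
      have h2 := hrel j0
      rw [hmu (T.tri j)] at h1
      linarith
    · intro f
      have hmu : ∀ f, mu f = mu (T.tri j0) := by
        intro f
        induction hconn (T.tri j0) f with
        | refl => rfl
        | tail hab hbc ih =>
          obtain ⟨j, hj1, hj2⟩ := hbc
          have h1 := hrel j
          have h2 := hrel (T.sgm j)
          rw [T.opp_sgm] at h2
          rw [hj1] at h1
          rw [hj2] at h2
          rw [← ih]
          linarith
      have h2 := hrel j0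
      rw [hmu f]
      linarith
  · -- nxt is bijective
    have hinj : Function.Injective T.nxt := by
      intro a b h
      have := congrArg (fun x => T.nxt (T.nxt x)) h
      simpa [T.nxt_nxt_nxt] using this
    have hbij : Function.Bijective T.nxt := Finite.injective_iff_bijective.mp hinj
    -- key sums
    set S1 : ℝ := ∑ j : Cor, α (T.opp j) with hS1
    have hsum_nxt : ∑ j : Cor, α (T.opp (T.nxt j)) = S1 :=
      Fintype.sum_bijective T.nxt hbij _ _ (fun _ => rfl)
    have hsum_nxt2 : ∑ j : Cor, α (T.opp (T.nxt (T.nxt j))) = S1 :=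
      Fintype.sum_bijective (T.nxt ∘ T.nxt) (hbij.comp hbij) _ _ (fun _ => rfl)
    -- vertex condition globally
    have hglob : (2 : ℝ) * S1 = (Fintype.card V : ℝ) * (4 * π) := by
      have h1 : ∑ v : V, ∑ j ∈ Finset.univ.filter (fun j => T.vert j = v),
          (α (T.opp (T.nxt j)) + α (T.opp (T.nxt (T.nxt j))))
          = ∑ j : Cor, (α (T.opp (T.nxt j)) + α (T.opp (T.nxt (T.nxt j)))) :=
        Finset.sum_fiberwise _ _ _
      rw [Finset.sum_congr rfl (fun v _ => hvert v), Finset.sum_const,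
        Finset.card_univ] at h1
      rw [Finset.sum_add_distrib, hsum_nxt, hsum_nxt2] at h1
      rw [nsmul_eq_mul] at h1
      linarith
    -- S1 = 2 * ∑ α e
    have hfib : S1 = ∑ e : E, (2 : ℝ) * α e := by
      rw [hS1, ← Finset.sum_fiberwise Finset.univ T.opp (fun j => α (T.opp j))]
      refine Finset.sum_congr rfl (fun e _ => ?_)
      obtain ⟨j, rfl⟩ := T.opp_surj e
      have hfilter : Finset.univ.filter (fun k => T.opp k = T.opp j)
          = {j, T.sgm j} := by
        ext k
        simp only [Finset.mem_filter, Finset.mem_univ, true_and,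
          Finset.mem_insert, Finset.mem_singleton]
        constructor
        · intro h
          exact T.opp_fiber j k h.symm
        · rintro (rfl | rfl)
          · rfl
          · exact T.opp_sgm j
      rw [hfilter, Finset.sum_insert (by simpa using (T.sgm_ne j).symm),
        Finset.sum_singleton, T.opp_sgm]
      ring
    have hsumα : ∑ e : E, α e = (T.m : ℝ) * π / 2 := by
      have hV : (2 : ℝ) * (Fintype.card V : ℝ) = (T.m : ℝ) := by
        have h := congrArg (Nat.cast : ℕ → ℝ) T.card_verts
        push_cast at h
        linarith
      have hV' : (Fintype.card V : ℝ) * (4 * π) = (T.m : ℝ) * (2 * π) := by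
        rw [← hV]; ring
      rw [← Finset.mul_sum] at hfib
      rw [hV'] at hglob
      linarith
    have hE : (2 : ℝ) * (Fintype.card E : ℝ) = 3 * (T.m : ℝ) := by
      have h := congrArg (Nat.cast : ℕ → ℝ) T.card_edges
      push_cast at h
      linarith
    have hE' : (Fintype.card E : ℝ) * π = 3 * (T.m : ℝ) * π / 2 := by
      have := congrArg (fun x => x * π / 2) hE
      linarith
    rw [Finset.sum_sub_distrib, Finset.sum_const, Finset.card_univ,
      nsmul_eq_mul, hsumα, hE']
    ring
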